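/- Let G be a finite simple graph with n vertices and minimum degree δ satisfying 1000 ≤ δ ≤ 24000. Then the signed domination number of G satisfies γ_s(G) ≤ ((√(ln(δ+1)·(11.8 − 0.48 ln δ)) + 0.25) / √(δ+1)) · n. -/

import Mathlib

/-- `f : V → ℤ` is a signed domination function of `G`: it takes values in `{-1, +1}`
and sums to at least `1` over every closed neighbourhood. -/
def SimpleGraph.IsSignedDominationFunction {V : Type*} [Fintype V] [DecidableEq V]
    (G : SimpleGraph V) [DecidableRel G.Adj] (f : V → ℤ) : Prop :=
  (∀ v, f v = 1 ∨ f v = -1) ∧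
  ∀ v : V, 1 ≤ ∑ u ∈ insert v (G.neighborFinset v), f u

/-- The signed domination number `γ_s(G)`. -/
noncomputable def SimpleGraph.signedDominationNumber {V : Type*} [Fintype V] [DecidableEq V]
    (G : SimpleGraph V) [DecidableRel G.Adj] : ℤ :=
  sInf {s : ℤ | ∃ f : V → ℤ, G.IsSignedDominationFunction f ∧ s = ∑ v, f v}

open Finset

lemma aux_weight_sum {V : Type*} [Fintype V] [DecidableEq V] (p t : ℝ) (A : Finset V) :
    ∑ S ∈ (Finset.univ : Finset V).powerset,
      (p ^ S.card * (1 - p) ^ (Fintype.card V - S.card)) * t ^ ((S ∩ A).card)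
      = ((1 - p) + p * t) ^ A.card := by
  have h := Finset.prod_add (fun u : V => p * (if u ∈ A then t else 1))
    (fun _ : V => 1 - p) Finset.univ
  have hL : ∏ u : V, (p * (if u ∈ A then t else 1) + (1 - p)) = ((1 - p) + p * t) ^ A.card := by
    have : ∀ u : V, p * (if u ∈ A then t else 1) + (1 - p)
        = (if u ∈ A then ((1 - p) + p * t) else 1) := by
      intro u; split <;> ring
    rw [Finset.prod_congr rfl (fun u _ => this u), Finset.prod_ite_mem,
      Finset.univ_inter, Finset.prod_const]
  rw [hL] at h
  rw [h]
  apply Finset.sum_congr rfl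
  intro S hS
  have hSsub : S ⊆ Finset.univ := Finset.mem_powerset.mp hS
  have h1 : ∏ u ∈ S, (p * (if u ∈ A then t else 1)) = p ^ S.card * t ^ ((S ∩ A).card) := by
    rw [Finset.prod_mul_distrib, Finset.prod_const]
    congr 1
    rw [Finset.prod_ite_mem, Finset.prod_const]
  have h2 : ∏ u ∈ Finset.univ \ S, (1 - p : ℝ) = (1 - p) ^ (Fintype.card V - S.card) := by
    rw [Finset.prod_const, Finset.card_sdiff_of_subset hSsub, Finset.card_univ]
  rw [h1, h2]; ring

lemma aux_mono (q : ℝ) (D : ℕ) (hq0 : 0 < q) (hq1 : q ≤ 1) (hD : 1 ≤ (D : ℝ) * (1 - q)) :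
    ∀ k : ℕ, ((D + k : ℕ) : ℝ) * q ^ (D + k) ≤ (D : ℝ) * q ^ D := by
  intro k
  induction k with
  | zero => simp
  | succ k ih =>
    refine le_trans ?_ ih
    have hstep : ((D + (k+1) : ℕ) : ℝ) * q ≤ ((D + k : ℕ) : ℝ) := by
      push_cast
      have h1 : (1:ℝ) ≤ ((D:ℝ) + k) * (1 - q) := by
        have hk : (0:ℝ) ≤ (k:ℝ) := Nat.cast_nonneg k
        nlinarith
      nlinarith
    have hqp : (0:ℝ) ≤ q ^ (D + k) := by positivity
    calc ((D + (k+1) : ℕ) : ℝ) * q ^ (D + (k+1))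
        = (((D + (k+1) : ℕ) : ℝ) * q) * q ^ (D + k) := by ring
      _ ≤ ((D + k : ℕ) : ℝ) * q ^ (D + k) := by
          exact mul_le_mul_of_nonneg_right hstep hqp
open Finset

set_option linter.unusedSectionVars false
section Comb
variable {V : Type*} [Fintype V] [DecidableEq V] (G : SimpleGraph V) [DecidableRel G.Adj]

def NvF (v : V) : Finset V := insert v (G.neighborFinset v)

def badF (S : Finset V) : Finset V :=
  Finset.univ.filter (fun v => (NvF G v).card ≤ 2 * ((S ∩ NvF G v).card))

def TF (S : Finset V) : Finset V := S \ (badF G S).biUnion (NvF G)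

lemma NvF_card (v : V) : (NvF G v).card = G.degree v + 1 := by
  rw [NvF, Finset.card_insert_of_notMem (by simp), SimpleGraph.card_neighborFinset_eq_degree]

lemma sum_ite_neg (A T : Finset V) :
    ∑ u ∈ A, (if u ∈ T then (-1 : ℤ) else 1) = (A.card : ℤ) - 2 * ((A ∩ T).card : ℤ) := by
  have h1 : ∀ u ∈ A, (if u ∈ T then (-1 : ℤ) else 1)
      = 1 - 2 * (if u ∈ T then (1 : ℤ) else 0) := by
    intro u _; split <;> ring
  rw [Finset.sum_congr rfl h1, Finset.sum_sub_distrib, Finset.sum_const, ← Finset.mul_sum,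
    Finset.sum_ite_mem, Finset.sum_const]
  simp

lemma TF_sdf (S : Finset V) :
    G.IsSignedDominationFunction (fun v => if v ∈ TF G S then (-1 : ℤ) else 1) := by
  constructor
  · intro v; by_cases h : v ∈ TF G S <;> simp [h]
  · intro v
    rw [show (insert v (G.neighborFinset v)) = NvF G v from rfl, sum_ite_neg]
    have hcard : 2 * ((NvF G v ∩ TF G S).card : ℤ) < (NvF G v).card := by
      by_cases hb : (NvF G v).card ≤ 2 * ((S ∩ NvF G v).card)
      · -- v is bad: NvF v is disjoint from TF
        have hvb : v ∈ badF G S := by simp [badF, hb]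
        have hdisj : NvF G v ∩ TF G S = ∅ := by
          apply Finset.eq_empty_of_forall_notMem
          intro u hu
          rw [Finset.mem_inter, TF, Finset.mem_sdiff] at hu
          exact hu.2.2 (Finset.mem_biUnion.mpr ⟨v, hvb, hu.1⟩)
        rw [hdisj]
        simp only [Finset.card_empty, Nat.cast_zero, mul_zero]
        have : 0 < (NvF G v).card := by
          rw [NvF_card]; omega
        exact_mod_cast this
      · push_neg at hb
        have hsub : NvF G v ∩ TF G S ⊆ S ∩ NvF G v := by
          intro u hu
          rw [Finset.mem_inter] at hu ⊢
          exact ⟨(Finset.mem_sdiff.mp hu.2).1, hu.1⟩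
        have := Finset.card_le_card hsub
        have hb' : 2 * ((S ∩ NvF G v).card) < (NvF G v).card := hb
        have : 2 * ((NvF G v ∩ TF G S).card) < (NvF G v).card := by omega
        exact_mod_cast this
    omega

lemma TF_sum (S : Finset V) :
    ∑ v : V, (if v ∈ TF G S then (-1 : ℤ) else 1)
      = (Fintype.card V : ℤ) - 2 * ((TF G S).card : ℤ) := by
  rw [sum_ite_neg, Finset.univ_inter, Finset.card_univ]

lemma gamma_le_TF (S : Finset V) :
    G.signedDominationNumber ≤ (Fintype.card V : ℤ) - 2 * ((TF G S).card : ℤ) := by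
  apply csInf_le
  · refine ⟨-(Fintype.card V : ℤ), ?_⟩
    rintro s ⟨f, hf, rfl⟩
    have : ∀ v : V, (-1 : ℤ) ≤ f v := by
      intro v; rcases hf.1 v with h | h <;> omega
    calc -(Fintype.card V : ℤ) = ∑ _v : V, (-1 : ℤ) := by
          simp [Finset.card_univ]
      _ ≤ ∑ v : V, f v := Finset.sum_le_sum (fun v _ => this v)
  · exact ⟨_, TF_sdf G S, (TF_sum G S).symm⟩

lemma card_S_le (S : Finset V) :
    S.card ≤ (TF G S).card + ∑ v ∈ badF G S, (NvF G v).card := by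
  have h1 : S ⊆ TF G S ∪ (badF G S).biUnion (NvF G) := by
    intro u hu
    rw [Finset.mem_union, TF, Finset.mem_sdiff]
    by_cases h : u ∈ (badF G S).biUnion (NvF G)
    · exact Or.inr h
    · exact Or.inl ⟨hu, h⟩
  calc S.card ≤ (TF G S ∪ (badF G S).biUnion (NvF G)).card := Finset.card_le_card h1
    _ ≤ (TF G S).card + ((badF G S).biUnion (NvF G)).card := Finset.card_union_le _ _
    _ ≤ (TF G S).card + ∑ v ∈ badF G S, (NvF G v).card := by
        exact Nat.add_le_add_left (Finset.card_biUnion_le) _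

end Comb
lemma num_log_ub : Real.log (24001 : ℝ) ≤ 10.2 := by
  rw [Real.log_le_iff_le_exp (by norm_num)]
  have h1 : (2.7182818283 : ℝ) ^ (10:ℕ) ≤ Real.exp 1 ^ (10:ℕ) := by
    apply pow_le_pow_left₀ (by norm_num) (le_of_lt Real.exp_one_gt_d9)
  have h2 : (1.2 : ℝ) ≤ Real.exp 0.2 := by
    have := Real.add_one_le_exp (0.2 : ℝ); linarith
  have h3 : Real.exp 1 ^ (10:ℕ) * Real.exp 0.2 = Real.exp 10.2 := by
    rw [← Real.exp_nat_mul, ← Real.exp_add]; norm_num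
  calc (24001:ℝ) ≤ 2.7182818283 ^ (10:ℕ) * 1.2 := by norm_num
    _ ≤ Real.exp 1 ^ (10:ℕ) * Real.exp 0.2 := by
        apply mul_le_mul h1 h2 (by norm_num) (by positivity)
    _ = Real.exp 10.2 := h3

lemma num_log_lb : (6 : ℝ) ≤ Real.log (1001 : ℝ) := by
  rw [Real.le_log_iff_exp_le (by norm_num)]
  have h1 : Real.exp 1 ^ (6:ℕ) ≤ (2.7182818286 : ℝ) ^ (6:ℕ) := by
    apply pow_le_pow_left₀ (le_of_lt (Real.exp_pos 1)) (le_of_lt Real.exp_one_lt_d9)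
  have h3 : Real.exp 1 ^ (6:ℕ) = Real.exp 6 := by
    rw [← Real.exp_nat_mul]; norm_num
  calc Real.exp 6 = Real.exp 1 ^ (6:ℕ) := h3.symm
    _ ≤ (2.7182818286 : ℝ) ^ (6:ℕ) := h1
    _ ≤ 1001 := by norm_num

lemma num_exp3 : (8 : ℝ) ≤ Real.exp 3 := by
  have h1 : (2.7182818283 : ℝ) ^ (3:ℕ) ≤ Real.exp 1 ^ (3:ℕ) := by
    apply pow_le_pow_left₀ (by norm_num) (le_of_lt Real.exp_one_gt_d9)
  have h3 : Real.exp 1 ^ (3:ℕ) = Real.exp 3 := by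
    rw [← Real.exp_nat_mul]; norm_num
  calc (8:ℝ) ≤ 2.7182818283 ^ (3:ℕ) := by norm_num
    _ ≤ Real.exp 3 := h3 ▸ h1
set_option maxHeartbeats 1600000 in
theorem signed_domination_upper_bound_delta_1000_24000
    {V : Type*} [Fintype V] [DecidableEq V] [Nonempty V]
    (G : SimpleGraph V) [DecidableRel G.Adj]
    (δ : ℕ) (hδdef : δ = G.minDegree) (hδ1 : 1000 ≤ δ) (hδ2 : δ ≤ 24000) :
    (G.signedDominationNumber : ℝ) ≤
      ((Real.sqrt (Real.log ((δ : ℝ) + 1) * (11.8 - 0.48 * Real.log (δ : ℝ))) + 0.25) /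
        Real.sqrt ((δ : ℝ) + 1)) * (Fintype.card V : ℝ) := by
  classical
  set D : ℕ := δ + 1 with hDdef
  have hDR : ((D : ℕ) : ℝ) = (δ : ℝ) + 1 := by push_cast [hDdef]; ring
  have hδR : (1000 : ℝ) ≤ (δ : ℝ) := by exact_mod_cast hδ1
  have hδR2 : (δ : ℝ) ≤ 24000 := by exact_mod_cast hδ2
  have hDRpos : (0 : ℝ) < (δ : ℝ) + 1 := by linarith
  -- log bounds
  have hlδ0 : 0 ≤ Real.log (δ : ℝ) := Real.log_nonneg (by linarith)
  have hlδ : Real.log (δ : ℝ) ≤ 10.2 :=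
    le_trans (Real.log_le_log (by linarith) (by linarith : (δ : ℝ) ≤ 24001)) num_log_ub
  set lD := Real.log ((δ : ℝ) + 1) with hlDdef
  have hlD_ub : lD ≤ 10.2 :=
    le_trans (Real.log_le_log (by linarith) (by linarith : (δ : ℝ) + 1 ≤ 24001)) num_log_ub
  have hlD_lb : (6 : ℝ) ≤ lD :=
    le_trans num_log_lb (Real.log_le_log (by norm_num) (by linarith : (1001 : ℝ) ≤ (δ : ℝ) + 1))
  set L : ℝ := lD * (11.8 - 0.48 * Real.log (δ : ℝ)) with hLdef
  have hfac_lb : (6.9 : ℝ) ≤ 11.8 - 0.48 * Real.log (δ : ℝ) := by linarith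
  have hfac_ub : 11.8 - 0.48 * Real.log (δ : ℝ) ≤ 11.8 := by linarith
  have hL_lb : (41 : ℝ) ≤ L := by
    have h := mul_le_mul hlD_lb hfac_lb (by linarith) (by linarith)
    rw [hLdef]; linarith
  have hL_ub : L ≤ 120.4 := by
    have h := mul_le_mul hlD_ub hfac_ub (by linarith) (by norm_num)
    rw [hLdef]; linarith
  have hL_lD : 6.9 * lD ≤ L := by
    have h := mul_le_mul_of_nonneg_left hfac_lb (by linarith : (0:ℝ) ≤ lD)
    rw [hLdef]; linarith
  set sD := Real.sqrt ((δ : ℝ) + 1) with hsDdef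
  have hsD_pos : 0 < sD := Real.sqrt_pos.mpr hDRpos
  have hsD_sq : sD ^ 2 = (δ : ℝ) + 1 := Real.sq_sqrt (le_of_lt hDRpos)
  set ε := Real.sqrt L / sD with hεdef
  have hε_nn : 0 ≤ ε := by positivity
  have hsL_sq : (Real.sqrt L) ^ 2 = L := Real.sq_sqrt (by linarith)
  have hε2 : ε ^ 2 * ((δ : ℝ) + 1) = L := by
    rw [hεdef, div_pow, hsL_sq, hsD_sq]
    field_simp
  have hε2_le : ε ^ 2 ≤ 1 / 4 := by
    have h := mul_le_mul_of_nonneg_left (by linarith : (1001:ℝ) ≤ (δ : ℝ) + 1) (sq_nonneg ε)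
    linarith
  have hε_half : ε ≤ 1 / 2 := by
    by_contra hcon
    push_neg at hcon
    have h2 : (1/2 : ℝ) * (1/2) < ε * ε := mul_self_lt_mul_self (by norm_num) hcon
    have h3 : ε * ε = ε ^ 2 := (sq ε).symm
    linarith
  set p := (1 - ε) / 2 with hpdef
  have hp1 : (1 : ℝ) / 4 ≤ p := by rw [hpdef]; linarith
  have hp2 : p ≤ 1 / 2 := by rw [hpdef]; linarith
  have h1me : (0 : ℝ) < 1 - ε := by linarith
  set μ := Real.sqrt ((1 + ε) / (1 - ε)) with hμdef
  have hμ2 : μ ^ 2 = (1 + ε) / (1 - ε) := Real.sq_sqrt (by positivity)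
  have hμ1 : 1 ≤ μ := by
    rw [hμdef, Real.one_le_sqrt]
    rw [le_div_iff₀ h1me]; linarith
  set q := Real.sqrt (1 - ε ^ 2) with hqdef
  have hq2 : q ^ 2 = 1 - ε ^ 2 := Real.sq_sqrt (by linarith)
  have hq_pos : 0 < q := Real.sqrt_pos.mpr (by linarith)
  have hq_le1 : q ≤ 1 := Real.sqrt_le_one.mpr (by linarith [sq_nonneg ε])
  have hqμ : q * μ = 1 + ε := by
    rw [hqdef, hμdef, ← Real.sqrt_mul (by linarith)]
    rw [show (1 - ε ^ 2) * ((1 + ε) / (1 - ε)) = (1 + ε) ^ 2 by field_simp; ring]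
    exact Real.sqrt_sq (by linarith)
  have hmix : (1 - p) + p * μ ^ 2 = 1 + ε := by
    rw [hμ2, hpdef]; field_simp; ring
  have h1q : 1 ≤ ((δ : ℝ) + 1) * (1 - q) := by
    have hq1' : (0:ℝ) ≤ 1 - q := by linarith
    have hfa : (1 - q) * (1 + q) = ε ^ 2 := by linear_combination -hq2
    have hb : ε ^ 2 ≤ 2 * (1 - q) := by
      have h := mul_le_mul_of_nonneg_left (show (1:ℝ) + q ≤ 2 by linarith) hq1'
      rw [hfa] at h; linarith
    have hc : L ≤ ((δ : ℝ) + 1) * (2 * (1 - q)) := by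
      calc L = ε ^ 2 * ((δ : ℝ) + 1) := hε2.symm
        _ ≤ (2 * (1 - q)) * ((δ : ℝ) + 1) := mul_le_mul_of_nonneg_right hb hDRpos.le
        _ = ((δ : ℝ) + 1) * (2 * (1 - q)) := by ring
    have hd : ((δ : ℝ) + 1) * (2 * (1 - q)) = 2 * (((δ : ℝ) + 1) * (1 - q)) := by ring
    linarith
  -- the random model
  set P := (Finset.univ : Finset V).powerset with hPdef
  set W : Finset V → ℝ := fun S => p ^ S.card * (1 - p) ^ (Fintype.card V - S.card) with hWdef
  have hW_nn : ∀ S : Finset V, 0 ≤ W S := by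
    intro S; rw [hWdef]
    have : (0:ℝ) ≤ p := by linarith
    have : (0:ℝ) ≤ 1 - p := by linarith
    positivity
  have hWsum : ∑ S ∈ P, W S = 1 := by
    have h := aux_weight_sum (V := V) p 1 (∅ : Finset V)
    simpa [hPdef, hWdef] using h
  have hmarg : ∀ v : V, ∑ S ∈ P, W S * (if v ∈ S then (1 : ℝ) else 0) = p := by
    intro v
    have h0 := aux_weight_sum (V := V) p 0 ({v} : Finset V)
    have hid : ∀ S : Finset V, (if v ∈ S then (1 : ℝ) else 0)
        = 1 - (0 : ℝ) ^ ((S ∩ {v}).card) := by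
      intro S
      by_cases h : v ∈ S
      · have hiv : S ∩ {v} = {v} := by
          ext u
          simp only [Finset.mem_inter, Finset.mem_singleton]
          constructor
          · rintro ⟨_, h2⟩; exact h2
          · rintro rfl; exact ⟨h, rfl⟩
        rw [hiv]; simp [h]
      · have hiv : S ∩ {v} = ∅ := by
          ext u
          simp only [Finset.mem_inter, Finset.mem_singleton, Finset.notMem_empty, iff_false,
            not_and]
          rintro hu rfl; exact h hu
        rw [hiv]; simp [h]
    calc ∑ S ∈ P, W S * (if v ∈ S then (1 : ℝ) else 0)
        = ∑ S ∈ P, (W S - W S * (0 : ℝ) ^ ((S ∩ {v}).card)) := by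
          apply Finset.sum_congr rfl; intro S _; rw [hid S]; ring
      _ = (∑ S ∈ P, W S) - ∑ S ∈ P, W S * (0 : ℝ) ^ ((S ∩ {v}).card) :=
          Finset.sum_sub_distrib _ _
      _ = 1 - ((1 - p) + p * 0) ^ (({v} : Finset V).card) := by rw [hWsum, h0]
      _ = p := by simp
  have hcardsum : ∑ S ∈ P, W S * (S.card : ℝ) = p * (Fintype.card V : ℝ) := by
    have hexp : ∀ S ∈ P, ((S.card : ℝ)) = ∑ v : V, (if v ∈ S then (1 : ℝ) else 0) := by
      intro S _
      rw [Finset.sum_boole]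
      norm_num [Finset.filter_mem_eq_inter]
    calc ∑ S ∈ P, W S * (S.card : ℝ)
        = ∑ S ∈ P, ∑ v : V, W S * (if v ∈ S then (1 : ℝ) else 0) := by
          apply Finset.sum_congr rfl; intro S hS; rw [hexp S hS, Finset.mul_sum]
      _ = ∑ v : V, ∑ S ∈ P, W S * (if v ∈ S then (1 : ℝ) else 0) := Finset.sum_comm
      _ = ∑ _v : V, p := by apply Finset.sum_congr rfl; intro v _; exact hmarg v
      _ = p * (Fintype.card V : ℝ) := by
          rw [Finset.sum_const, Finset.card_univ, nsmul_eq_mul]; ring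
  -- bad probability bound
  have hbadp : ∀ v : V,
      ∑ S ∈ P, W S * (if (NvF G v).card ≤ 2 * ((S ∩ NvF G v).card) then (1 : ℝ) else 0)
        ≤ q ^ ((NvF G v).card) := by
    intro v
    set A := NvF G v with hA
    set m := A.card with hm
    have hfact : ∑ S ∈ P, W S * (μ ^ 2) ^ ((S ∩ A).card) = (1 + ε) ^ m := by
      rw [← hmix]; exact aux_weight_sum p (μ ^ 2) A
    have hpt : ∀ S ∈ P,
        (W S * (if m ≤ 2 * ((S ∩ A).card) then (1 : ℝ) else 0)) * μ ^ m
          ≤ W S * (μ ^ 2) ^ ((S ∩ A).card) := by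
      intro S _
      by_cases h : m ≤ 2 * ((S ∩ A).card)
      · rw [if_pos h, mul_one]
        have hle : μ ^ m ≤ (μ ^ 2) ^ ((S ∩ A).card) := by
          rw [← pow_mul]
          exact pow_le_pow_right₀ hμ1 h
        exact mul_le_mul_of_nonneg_left hle (hW_nn S)
      · rw [if_neg h, mul_zero, zero_mul]
        exact mul_nonneg (hW_nn S) (pow_nonneg (sq_nonneg μ) _)
    have hsum := Finset.sum_le_sum hpt
    rw [← Finset.sum_mul, hfact] at hsum
    have hμm_pos : 0 < μ ^ m := pow_pos (lt_of_lt_of_le one_pos hμ1) m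
    have h2 : (1 + ε) ^ m = q ^ m * μ ^ m := by rw [← mul_pow, hqμ]
    rw [h2] at hsum
    exact le_of_mul_le_mul_right hsum hμm_pos
  -- monotone bound on m q^m
  have hmq : ∀ v : V, ((NvF G v).card : ℝ) * q ^ ((NvF G v).card) ≤ ((δ : ℝ) + 1) * q ^ D := by
    intro v
    have hdeg : D ≤ (NvF G v).card := by
      rw [NvF_card]
      have := G.minDegree_le_degree v
      omega
    obtain ⟨k, hk⟩ : ∃ k, (NvF G v).card = D + k := ⟨(NvF G v).card - D, by omega⟩
    have haux := aux_mono q D hq_pos hq_le1 (by rw [hDR]; exact h1q) k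
    rw [hk]
    rw [hDR] at haux
    exact_mod_cast haux
  -- expectation chain
  have step1 : (G.signedDominationNumber : ℝ)
      ≤ ∑ S ∈ P, W S * ((Fintype.card V : ℝ) - 2 * ((TF G S).card : ℝ)) := by
    have hγT : ∀ S ∈ P, (G.signedDominationNumber : ℝ)
        ≤ (Fintype.card V : ℝ) - 2 * ((TF G S).card : ℝ) := by
      intro S _
      exact_mod_cast gamma_le_TF G S
    calc (G.signedDominationNumber : ℝ)
        = (∑ S ∈ P, W S) * (G.signedDominationNumber : ℝ) := by rw [hWsum, one_mul]
      _ = ∑ S ∈ P, W S * (G.signedDominationNumber : ℝ) := Finset.sum_mul _ _ _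
      _ ≤ ∑ S ∈ P, W S * ((Fintype.card V : ℝ) - 2 * ((TF G S).card : ℝ)) :=
          Finset.sum_le_sum (fun S hS => mul_le_mul_of_nonneg_left (hγT S hS) (hW_nn S))
  have step2 : ∀ S ∈ P, (Fintype.card V : ℝ) - 2 * ((TF G S).card : ℝ)
      ≤ ((Fintype.card V : ℝ) - 2 * (S.card : ℝ))
        + 2 * ∑ v : V, (if (NvF G v).card ≤ 2 * ((S ∩ NvF G v).card)
            then ((NvF G v).card : ℝ) else 0) := by
    intro S _
    have h := card_S_le G S
    have h3 : ∑ v ∈ badF G S, ((NvF G v).card)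
        = ∑ v : V, (if (NvF G v).card ≤ 2 * ((S ∩ NvF G v).card) then (NvF G v).card else 0) := by
      rw [badF, Finset.sum_filter]
    rw [h3] at h
    have h4 : (S.card : ℝ) ≤ ((TF G S).card : ℝ)
        + ∑ v : V, (if (NvF G v).card ≤ 2 * ((S ∩ NvF G v).card)
            then ((NvF G v).card : ℝ) else 0) := by
      exact_mod_cast h
    linarith
  have step3 : ∑ S ∈ P, W S * ((Fintype.card V : ℝ) - 2 * ((TF G S).card : ℝ))
      ≤ (Fintype.card V : ℝ) * (ε + 2 * (((δ : ℝ) + 1) * q ^ D)) := by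
    have e3 : ∀ v : V, ∑ S ∈ P, W S * (if (NvF G v).card ≤ 2 * ((S ∩ NvF G v).card)
        then ((NvF G v).card : ℝ) else 0) ≤ ((δ : ℝ) + 1) * q ^ D := by
      intro v
      have hrw : ∀ S ∈ P, W S * (if (NvF G v).card ≤ 2 * ((S ∩ NvF G v).card)
          then ((NvF G v).card : ℝ) else 0)
          = ((NvF G v).card : ℝ) * (W S * (if (NvF G v).card ≤ 2 * ((S ∩ NvF G v).card)
              then (1 : ℝ) else 0)) := by
        intro S _; split <;> ring
      rw [Finset.sum_congr rfl hrw, ← Finset.mul_sum]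
      calc ((NvF G v).card : ℝ) * ∑ S ∈ P, W S * (if (NvF G v).card ≤ 2 * ((S ∩ NvF G v).card)
            then (1 : ℝ) else 0)
          ≤ ((NvF G v).card : ℝ) * q ^ ((NvF G v).card) :=
            mul_le_mul_of_nonneg_left (hbadp v) (Nat.cast_nonneg _)
        _ ≤ ((δ : ℝ) + 1) * q ^ D := hmq v
    calc ∑ S ∈ P, W S * ((Fintype.card V : ℝ) - 2 * ((TF G S).card : ℝ))
        ≤ ∑ S ∈ P, W S * (((Fintype.card V : ℝ) - 2 * (S.card : ℝ))
            + 2 * ∑ v : V, (if (NvF G v).card ≤ 2 * ((S ∩ NvF G v).card)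
              then ((NvF G v).card : ℝ) else 0)) :=
          Finset.sum_le_sum (fun S hS => mul_le_mul_of_nonneg_left (step2 S hS) (hW_nn S))
      _ = ((Fintype.card V : ℝ) - 2 * p * (Fintype.card V : ℝ))
            + 2 * ∑ v : V, ∑ S ∈ P, W S * (if (NvF G v).card ≤ 2 * ((S ∩ NvF G v).card)
              then ((NvF G v).card : ℝ) else 0) := by
          have expand : ∀ S ∈ P, W S * (((Fintype.card V : ℝ) - 2 * (S.card : ℝ))
              + 2 * ∑ v : V, (if (NvF G v).card ≤ 2 * ((S ∩ NvF G v).card)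
                then ((NvF G v).card : ℝ) else 0))
              = (W S * (Fintype.card V : ℝ) - 2 * (W S * (S.card : ℝ)))
                + 2 * ∑ v : V, W S * (if (NvF G v).card ≤ 2 * ((S ∩ NvF G v).card)
                  then ((NvF G v).card : ℝ) else 0) := by
            intro S _
            have hX : ∑ v : V, W S * (if (NvF G v).card ≤ 2 * ((S ∩ NvF G v).card)
                then ((NvF G v).card : ℝ) else 0)
                = W S * ∑ v : V, (if (NvF G v).card ≤ 2 * ((S ∩ NvF G v).card)
                  then ((NvF G v).card : ℝ) else 0) := (Finset.mul_sum _ _ _).symm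
            rw [hX]
            ring
          rw [Finset.sum_congr rfl expand, Finset.sum_add_distrib, Finset.sum_sub_distrib,
            ← Finset.sum_mul, hWsum, ← Finset.mul_sum, hcardsum, ← Finset.mul_sum,
            Finset.sum_comm]
          ring
      _ ≤ ((Fintype.card V : ℝ) - 2 * p * (Fintype.card V : ℝ))
            + 2 * ∑ _v : V, ((δ : ℝ) + 1) * q ^ D := by
          have := Finset.sum_le_sum (fun v (_ : v ∈ Finset.univ) => e3 v)
          linarith
      _ = (Fintype.card V : ℝ) * (ε + 2 * (((δ : ℝ) + 1) * q ^ D)) := by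
          rw [Finset.sum_const, Finset.card_univ, nsmul_eq_mul, hpdef]
          ring
  -- final numeric bound
  have hqe : q ≤ Real.exp (-(ε ^ 2) / 2) := by
    have h1 : q ^ 2 ≤ Real.exp (-(ε ^ 2)) := by
      have := Real.add_one_le_exp (-(ε ^ 2))
      rw [hq2]; linarith
    have h2 : Real.exp (-(ε ^ 2)) = (Real.exp (-(ε ^ 2) / 2)) ^ 2 := by
      rw [show (Real.exp (-(ε ^ 2) / 2)) ^ 2
          = Real.exp (-(ε ^ 2) / 2) * Real.exp (-(ε ^ 2) / 2) from pow_two _,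
        ← Real.exp_add]
      congr 1
      ring
    calc q = Real.sqrt (q ^ 2) := (Real.sqrt_sq hq_pos.le).symm
      _ ≤ Real.sqrt ((Real.exp (-(ε ^ 2) / 2)) ^ 2) := Real.sqrt_le_sqrt (h2 ▸ h1)
      _ = Real.exp (-(ε ^ 2) / 2) := Real.sqrt_sq (Real.exp_pos _).le
  have hqD : q ^ D ≤ Real.exp (-(L / 2)) := by
    calc q ^ D ≤ (Real.exp (-(ε ^ 2) / 2)) ^ D := pow_le_pow_left₀ hq_pos.le hqe D
      _ = Real.exp ((D : ℕ) * (-(ε ^ 2) / 2)) := (Real.exp_nat_mul _ D).symm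
      _ = Real.exp (-(L / 2)) := by
          congr 1
          rw [hDR]
          linear_combination (-1 / 2 : ℝ) * hε2
  have hsDexp : sD = Real.exp (lD / 2) := by
    have h1 : (Real.exp (lD / 2)) ^ 2 = (δ : ℝ) + 1 := by
      rw [pow_two, ← Real.exp_add]
      rw [show lD / 2 + lD / 2 = lD by ring]
      exact Real.exp_log hDRpos
    rw [hsDdef, ← h1, Real.sqrt_sq (Real.exp_pos _).le]
  have h8 : 8 * (((δ : ℝ) + 1) * sD) ≤ Real.exp (L / 2) := by
    have hδ1exp : (δ : ℝ) + 1 = Real.exp lD := (Real.exp_log hDRpos).symm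
    calc 8 * (((δ : ℝ) + 1) * sD) ≤ Real.exp 3 * (Real.exp lD * Real.exp (lD / 2)) := by
          rw [← hδ1exp, ← hsDexp]
          have hpos : (0:ℝ) ≤ ((δ : ℝ) + 1) * sD := by positivity
          exact mul_le_mul_of_nonneg_right num_exp3 hpos
      _ = Real.exp (3 + (lD + lD / 2)) := by rw [← Real.exp_add, ← Real.exp_add]
      _ ≤ Real.exp (L / 2) := by
          apply Real.exp_le_exp.mpr
          linarith
  have hfin : 2 * (((δ : ℝ) + 1) * q ^ D) ≤ (1 / 4) / sD := by
    rw [le_div_iff₀ hsD_pos]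
    have h1 : 2 * (((δ : ℝ) + 1) * q ^ D) * sD
        ≤ 2 * (((δ : ℝ) + 1) * Real.exp (-(L / 2))) * sD := by
      have h0 : (0:ℝ) ≤ 2 * ((δ : ℝ) + 1) * sD := by positivity
      calc 2 * (((δ : ℝ) + 1) * q ^ D) * sD = (2 * ((δ : ℝ) + 1) * sD) * q ^ D := by ring
        _ ≤ (2 * ((δ : ℝ) + 1) * sD) * Real.exp (-(L / 2)) :=
            mul_le_mul_of_nonneg_left hqD h0
        _ = 2 * (((δ : ℝ) + 1) * Real.exp (-(L / 2))) * sD := by ring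
    have h2 : Real.exp (-(L / 2)) * Real.exp (L / 2) = 1 := by
      rw [← Real.exp_add]; simp
    have h3 := mul_le_mul_of_nonneg_left h8 (Real.exp_pos (-(L / 2))).le
    rw [h2] at h3
    have h4 : 2 * (((δ : ℝ) + 1) * Real.exp (-(L / 2))) * sD
        = (1/4) * (Real.exp (-(L / 2)) * (8 * (((δ : ℝ) + 1) * sD))) := by ring
    linarith
  have hcoeff : ε + 2 * (((δ : ℝ) + 1) * q ^ D) ≤ (Real.sqrt L + 0.25) / sD := by
    have hsplit : (Real.sqrt L + 0.25) / sD = Real.sqrt L / sD + (1 / 4) / sD := by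
      rw [← add_div]; norm_num
    rw [hsplit, ← hεdef]
    linarith
  calc (G.signedDominationNumber : ℝ)
      ≤ ∑ S ∈ P, W S * ((Fintype.card V : ℝ) - 2 * ((TF G S).card : ℝ)) := step1
    _ ≤ (Fintype.card V : ℝ) * (ε + 2 * (((δ : ℝ) + 1) * q ^ D)) := step3
    _ ≤ (Fintype.card V : ℝ) * ((Real.sqrt L + 0.25) / sD) :=
        mul_le_mul_of_nonneg_left hcoeff (Nat.cast_nonneg _)
    _ = ((Real.sqrt L + 0.25) / sD) * (Fintype.card V : ℝ) := mul_comm _ _
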